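/- arXiv:0707.4633 — 2 statements merged into one kernel-verified Lean document; each statement's English description precedes it below -/
import Mathlib

section
/- The number of Dyck paths of size n containing no factor UDU equals the Motzkin number M_{n-1}, for n ≥ 1. -/
/-- Motzkin numbers: `M 0 = 1`, `M (n+1) = M n + ∑_{k=0}^{n-1} M k * M (n-1-k)`. -/
def motzkin : ℕ → ℕ
  | 0 => 1
  | n + 1 => motzkin n + ∑ k ∈ (Finset.range n).attach,
      motzkin k.1 * motzkin (n - 1 - k.1)
decreasing_by
  all_goals (try exact Nat.lt_succ_self n)
  all_goals (have := Finset.mem_range.mp k.2; omega)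

/-- A Dyck path of size `n`, encoded as a list of booleans (`true` = up-step `U`,
`false` = down-step `D`): length `2n`, `n` up-steps, and every prefix has at least
as many `U`'s as `D`'s. -/
def IsDyckPath (n : ℕ) (l : List Bool) : Prop :=
  l.length = 2 * n ∧ l.count true = n ∧
  ∀ p : List Bool, p <+: l → p.count false ≤ p.count true

open List DyckStep

/-- Whether a list of Dyck steps contains the factor `U, D, U`. -/
def hasUDU : List DyckStep → Bool
  | U :: D :: U :: _ => true
  | _ :: l => hasUDU l
  | [] => false

@[simp] lemma hasUDU_nil : hasUDU [] = false := rfl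
@[simp] lemma hasUDU_D (l : List DyckStep) : hasUDU (D :: l) = hasUDU l := by
  cases l with
  | nil => rfl
  | cons a t => cases a <;> rfl
@[simp] lemma hasUDU_UU (l : List DyckStep) : hasUDU (U :: U :: l) = hasUDU (U :: l) := rfl
@[simp] lemma hasUDU_UDU (l : List DyckStep) : hasUDU (U :: D :: U :: l) = true := rfl
@[simp] lemma hasUDU_UDD (l : List DyckStep) : hasUDU (U :: D :: D :: l) = hasUDU (D :: l) := rfl
@[simp] lemma hasUDU_singleU : hasUDU [U] = false := rfl
@[simp] lemma hasUDU_UD : hasUDU [U, D] = false := rfl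

lemma hasUDU_iff (l : List DyckStep) : hasUDU l = true ↔ [U, D, U] <:+: l := by
  induction l with
  | nil => simp
  | cons a t ih =>
    rw [List.infix_cons_iff]
    cases a with
    | D =>
      simp only [hasUDU_D, ih, iff_or_self]
      rintro ⟨s, hs⟩
      simp at hs
    | U =>
      match t with
      | [] => simp [List.IsPrefix]
      | [D] =>
        simp only [List.IsPrefix, List.IsInfix, hasUDU_UD]
        constructor
        · simp
        · rintro (⟨s, hs⟩ | ⟨s, t, hs⟩) <;> (apply_fun List.length at hs; simp at hs) <;> omega
      | U :: t' =>
        rw [hasUDU_UU, ih, List.infix_cons_iff]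
        constructor
        · tauto
        · rintro (⟨s, hs⟩ | h)
          · simp at hs
          · exact h
      | D :: U :: t' =>
        simp only [hasUDU_UDU, true_iff]
        exact .inl ⟨t', rfl⟩
      | D :: D :: t' =>
        rw [show hasUDU (U :: D :: D :: t') = hasUDU (D :: D :: t') by simp, ih]
        constructor
        · tauto
        · rintro (⟨s, hs⟩ | h)
          · simp at hs
          · exact h

lemma hasUDU_append_D' : ∀ (n : ℕ) (x y : List DyckStep), x.length = n →
    (x.getLast? = some D ∨ x = []) →
    hasUDU (x ++ D :: y) = (hasUDU x || hasUDU y) := by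
  intro n
  induction n using Nat.strong_induction_on with
  | _ n ih =>
  intro x y hn hx
  match x with
  | [] => simp
  | [U] => simp at hx
  | [D] => simp
  | D :: b :: x' =>
    simp only [cons_append, hasUDU_D]
    exact ih (b :: x').length (by simp at hn ⊢; omega) (b :: x') y rfl
      (by rcases hx with h | h
          · left; simpa using h
          · simp at h)
  | U :: U :: x' =>
    simp only [cons_append, hasUDU_UU]
    have := ih (U :: x').length (by simp at hn ⊢; omega) (U :: x') y rfl
      (by rcases hx with h | h
          · left; simpa using h
          · simp at h)
    simpa using this
  | [U, D] => simp
  | U :: D :: U :: x' => simp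
  | U :: D :: D :: x' =>
    simp only [cons_append, hasUDU_UDD, hasUDU_D]
    have := ih (D :: x').length (by simp at hn ⊢; omega) (D :: x') y rfl
      (by rcases hx with h | h
          · left; rw [← h]; rw [List.getLast?_cons_cons, List.getLast?_cons_cons]
          · simp at h)
    simpa using this

lemma hasUDU_append_D (x y : List DyckStep) (hx : x.getLast? = some D ∨ x = []) :
    hasUDU (x ++ D :: y) = (hasUDU x || hasUDU y) :=
  hasUDU_append_D' x.length x y rfl hx

namespace DyckWord

lemma toList_add (p q : DyckWord) : (p + q).toList = p.toList ++ q.toList := rfl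
lemma toList_nest (p : DyckWord) : p.nest.toList = [U] ++ p.toList ++ [D] := rfl
lemma toList_zero : (0 : DyckWord).toList = [] := rfl

/-- The first-return decomposition is compatible with UDU-avoidance when the inside part
is nonempty. -/
lemma hasUDU_nest_add (q r : DyckWord) (hq : q ≠ 0) :
    hasUDU (q.nest + r).toList = (hasUDU q.toList || hasUDU r.toList) := by
  have hql : q.toList ≠ [] := toList_ne_nil.mpr hq
  have hhd : q.toList = U :: q.toList.tail := by
    conv_lhs => rw [← List.cons_head_tail hql]
    rw [q.head_eq_U hql]
  have hlast : (U :: q.toList).getLast? = some D := by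
    conv_lhs => rw [hhd]
    rw [List.getLast?_cons_cons, ← hhd, List.getLast?_eq_some_getLast hql, q.getLast_eq_D hql]
  have : (q.nest + r).toList = (U :: q.toList) ++ D :: r.toList := by
    rw [toList_add, toList_nest]; simp
  rw [this, hasUDU_append_D _ _ (Or.inl hlast)]
  congr 1
  conv_lhs => rw [hhd]
  rw [hasUDU_UU, ← hhd]

lemma hasUDU_nest_zero_add (r : DyckWord) (hr : r ≠ 0) :
    hasUDU ((0 : DyckWord).nest + r).toList = true := by
  have hrl : r.toList ≠ [] := toList_ne_nil.mpr hr
  have hhd : r.toList = U :: r.toList.tail := by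
    conv_lhs => rw [← List.cons_head_tail hrl]
    rw [r.head_eq_U hrl]
  have : ((0 : DyckWord).nest + r).toList = U :: D :: r.toList := by
    rw [toList_add, toList_nest, toList_zero]; simp
  rw [this, hhd, hasUDU_UDU]

end DyckWord

open DyckWord

/-- UDU-avoiding Dyck words of semilength `n`, as a finset. -/
noncomputable def avoidF (n : ℕ) : Finset DyckWord :=
  ((Finset.univ : Finset {p : DyckWord // p.semilength = n}).map
    (Function.Embedding.subtype _)).filter fun p => hasUDU p.toList = false

lemma mem_avoidF {n : ℕ} {p : DyckWord} :
    p ∈ avoidF n ↔ p.semilength = n ∧ hasUDU p.toList = false := by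
  simp [avoidF]

lemma avoidF_zero : avoidF 0 = {0} := by
  ext p
  simp only [mem_avoidF, Finset.mem_singleton]
  constructor
  · rintro ⟨h0, -⟩
    have := p.two_mul_semilength_eq_length
    rw [h0] at this
    rw [← toList_eq_nil, ← List.length_eq_zero_iff]
    omega
  · rintro rfl; exact ⟨rfl, rfl⟩

lemma avoidF_one : avoidF 1 = {(0 : DyckWord).nest} := by
  ext p
  simp only [mem_avoidF, Finset.mem_singleton]
  constructor
  · rintro ⟨h1, -⟩
    have hp : p ≠ 0 := by
      rintro rfl; rw [show semilength 0 = 0 from rfl] at h1; exact one_ne_zero h1.symm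
    have hlen := p.two_mul_semilength_eq_length
    rw [h1] at hlen
    have hmain := p.cons_tail_dropLast_concat hp
    have hmid : p.toList.dropLast.tail = [] := by
      rw [← List.length_eq_zero_iff]
      have := congrArg List.length hmain
      simp only [List.length_append, List.length_cons, List.length_singleton] at this
      omega
    ext1
    rw [← hmain, hmid, toList_nest, toList_zero]
    rfl
  · rintro rfl
    constructor
    · simp
    · rfl

noncomputable def acount (n : ℕ) : ℕ := (avoidF n).card

lemma acount_zero : acount 0 = 1 := by rw [acount, avoidF_zero]; rfl
lemma acount_one : acount 1 = 1 := by rw [acount, avoidF_one]; rfl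

lemma semilength_eq_zero_iff {p : DyckWord} : p.semilength = 0 ↔ p = 0 := by
  constructor
  · intro h
    have := p.two_mul_semilength_eq_length
    rw [h] at this
    rw [← toList_eq_nil, ← List.length_eq_zero_iff]
    omega
  · rintro rfl; rfl

lemma acount_rec (n : ℕ) (hn : 2 ≤ n) :
    acount n = ∑ k ∈ Finset.Icc 1 (n-1), acount k * acount (n-1-k) := by
  classical
  have hT : ∑ k ∈ Finset.Icc 1 (n-1), acount k * acount (n-1-k)
      = ((Finset.Icc 1 (n-1)).sigma fun k => (avoidF k) ×ˢ (avoidF (n-1-k))).card := by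
    rw [Finset.card_sigma]
    simp [acount, Finset.card_product]
  rw [hT, acount]
  apply Finset.card_nbij'
    (i := fun p => (⟨p.insidePart.semilength, (p.insidePart, p.outsidePart)⟩ :
      Σ _ : ℕ, DyckWord × DyckWord))
    (j := fun x => x.2.1.nest + x.2.2)
  · -- hi
    intro p hp
    rw [Finset.mem_coe, mem_avoidF] at hp
    obtain ⟨hsl, hav⟩ := hp
    have hp0 : p ≠ 0 := by
      intro h; have h0 := semilength_eq_zero_iff.mpr h; omega
    have hdec := p.nest_insidePart_add_outsidePart hp0
    have hq0 : p.insidePart ≠ 0 := by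
      intro h
      have hr0 : p.outsidePart ≠ 0 := by
        intro h2
        have := p.semilength_insidePart_add_semilength_outsidePart_add_one hp0
        rw [semilength_eq_zero_iff.mpr h, semilength_eq_zero_iff.mpr h2, hsl] at this
        omega
      have := hasUDU_nest_zero_add p.outsidePart hr0
      rw [← h, hdec, hav] at this
      exact Bool.false_ne_true this
    have hsplit := hasUDU_nest_add p.insidePart p.outsidePart hq0
    rw [hdec, hav] at hsplit
    rw [eq_comm, Bool.or_eq_false_iff] at hsplit
    obtain ⟨hqa, hra⟩ := hsplit
    have hsum := p.semilength_insidePart_add_semilength_outsidePart_add_one hp0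
    have hlt := p.semilength_insidePart_lt hp0
    rw [Finset.mem_coe, Finset.mem_sigma, Finset.mem_product, Finset.mem_Icc, mem_avoidF, mem_avoidF]
    dsimp only
    refine ⟨⟨?_, by omega⟩, ⟨rfl, hqa⟩, ⟨by omega, hra⟩⟩
    · rcases Nat.eq_zero_or_pos p.insidePart.semilength with h | h
      · exact absurd (semilength_eq_zero_iff.mp h) hq0
      · exact h
  · -- hj
    rintro ⟨k, q, r⟩ hx
    rw [Finset.mem_coe, Finset.mem_sigma, Finset.mem_product, Finset.mem_Icc, mem_avoidF, mem_avoidF] at hx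
    obtain ⟨⟨hk1, hk2⟩, ⟨hqs, hqa⟩, ⟨hrs, hra⟩⟩ := hx
    have hq0 : q ≠ 0 := by
      intro h; rw [semilength_eq_zero_iff.mpr h] at hqs; omega
    rw [Finset.mem_coe, mem_avoidF]
    constructor
    · rw [semilength_add, semilength_nest, hqs, hrs]; omega
    · rw [hasUDU_nest_add q r hq0, hqa, hra]; rfl
  · -- left_inv
    intro p hp
    rw [Finset.mem_coe, mem_avoidF] at hp
    have hp0 : p ≠ 0 := by
      intro h
      have h0 := semilength_eq_zero_iff.mpr h
      have := hp.1
      omega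
    exact p.nest_insidePart_add_outsidePart hp0
  · -- right_inv
    rintro ⟨k, q, r⟩ hx
    rw [Finset.mem_coe, Finset.mem_sigma, Finset.mem_product, Finset.mem_Icc, mem_avoidF, mem_avoidF] at hx
    obtain ⟨⟨hk1, hk2⟩, ⟨hqs, hqa⟩, ⟨hrs, hra⟩⟩ := hx
    have e1 : (q.nest + r).insidePart = q := by
      rw [insidePart_add q.nest_ne_zero, insidePart_nest]
    have e2 : (q.nest + r).outsidePart = r := by
      rw [outsidePart_add q.nest_ne_zero, outsidePart_nest, zero_add]
    dsimp only at hqs hrs hqa hra hk1 hk2 ⊢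
    simp only [e1, e2]
    subst hqs
    rfl

lemma motzkin_zero : motzkin 0 = 1 := by unfold motzkin; rfl

lemma motzkin_succ (n : ℕ) :
    motzkin (n+1) = motzkin n + ∑ k ∈ Finset.range n, motzkin k * motzkin (n-1-k) := by
  rw [motzkin]
  congr 1
  exact Finset.sum_attach (Finset.range n) (fun k => motzkin k * motzkin (n - 1 - k))

lemma acount_eq_motzkin (n : ℕ) (hn : 1 ≤ n) : acount n = motzkin (n - 1) := by
  induction n using Nat.strong_induction_on with
  | _ n ih =>
  match n, hn with
  | 1, _ => rw [acount_one, motzkin_zero]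
  | (m+2), _ =>
    rw [acount_rec (m+2) (by omega)]
    have hsplit : Finset.Icc 1 (m+2-1) = insert (m+1) (Finset.Icc 1 m) := by
      ext k
      simp only [Finset.mem_Icc, Finset.mem_insert]
      omega
    rw [hsplit, Finset.sum_insert (by simp [Finset.mem_Icc])]
    have e0 : m + 2 - 1 - (m+1) = 0 := by omega
    rw [e0, acount_zero, mul_one]
    have eam : acount (m+1) = motzkin m := by
      have := ih (m+1) (by omega) (by omega)
      simpa using this
    have esum : ∑ k ∈ Finset.Icc 1 m, acount k * acount (m + 2 - 1 - k)
        = ∑ j ∈ Finset.range m, motzkin j * motzkin (m - 1 - j) := by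
      apply Finset.sum_nbij' (i := fun k => k - 1) (j := fun j => j + 1)
      · intro a ha; simp only [Finset.mem_Icc] at ha; simp only [Finset.mem_range]; omega
      · intro a ha; simp only [Finset.mem_range] at ha; simp only [Finset.mem_Icc]; omega
      · intro a ha; simp only [Finset.mem_Icc] at ha; omega
      · intro a ha; omega
      · intro k hk
        simp only [Finset.mem_Icc] at hk
        have h1 : acount k = motzkin (k - 1) := ih k (by omega) (by omega)
        have h2 : acount (m + 2 - 1 - k) = motzkin (m + 2 - 1 - k - 1) :=
          ih (m + 2 - 1 - k) (by omega) (by omega)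
        rw [h1, h2]
        have h3 : m + 2 - 1 - k - 1 = m - 1 - (k - 1) := by omega
        rw [h3]
    rw [eam, esum, ← motzkin_succ]
    rfl

def toBool : DyckStep → Bool | U => true | D => false
def toStep : Bool → DyckStep | true => U | false => D

lemma toStep_toBool (s : DyckStep) : toStep (toBool s) = s := by cases s <;> rfl
lemma toBool_toStep (b : Bool) : toBool (toStep b) = b := by cases b <;> rfl
lemma toStep_inj : Function.Injective toStep := fun a b h => by
  rw [← toBool_toStep a, h, toBool_toStep]
lemma toBool_inj : Function.Injective toBool := fun a b h => by
  rw [← toStep_toBool a, h, toStep_toBool]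

lemma map_toStep_toBool (w : List DyckStep) : (w.map toBool).map toStep = w := by
  rw [List.map_map, show toStep ∘ toBool = id from funext toStep_toBool, List.map_id]
lemma map_toBool_toStep (l : List Bool) : (l.map toStep).map toBool = l := by
  rw [List.map_map, show toBool ∘ toStep = id from funext toBool_toStep, List.map_id]

lemma isInfix_map {α β : Type*} (f : α → β) {l₁ l₂ : List α} (h : l₁ <:+: l₂) :
    l₁.map f <:+: l₂.map f := by
  obtain ⟨s, t, rfl⟩ := h
  exact ⟨s.map f, t.map f, by simp⟩

lemma infix_TFT_iff (w : List DyckStep) :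
    [true, false, true] <:+: w.map toBool ↔ [U, D, U] <:+: w := by
  constructor
  · intro h
    have h2 := isInfix_map toStep h
    rw [map_toStep_toBool] at h2
    exact h2
  · intro h
    have h2 := isInfix_map toBool h
    exact h2

lemma count_bool (l : List Bool) : l.count true + l.count false = l.length := by
  induction l with
  | nil => rfl
  | cons a t ih => cases a <;> simp [List.count_cons] <;> omega

lemma set_eq (n : ℕ) :
    {l : List Bool | IsDyckPath n l ∧ ¬ ([true, false, true] <:+: l)}
      = ↑((avoidF n).image fun p => p.toList.map toBool) := by
  ext l
  simp only [Set.mem_setOf_eq, Finset.coe_image, Set.mem_image, Finset.mem_coe]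
  constructor
  · rintro ⟨⟨hlen, hcount, hpre⟩, havoid⟩
    have hcU : (l.map toStep).count U = l.count true := by
      rw [show U = toStep true from rfl]
      exact List.count_map_of_injective _ _ toStep_inj _
    have hcD : (l.map toStep).count D = l.count false := by
      rw [show D = toStep false from rfl]
      exact List.count_map_of_injective _ _ toStep_inj _
    have hcf : l.count false = n := by
      have := count_bool l
      omega
    refine ⟨⟨l.map toStep, ?_, ?_⟩, ?_, ?_⟩
    · rw [hcU, hcD, hcount, hcf]
    · intro i
      have htake : (l.map toStep).take i = (l.take i).map toStep := List.map_take.symm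
      have h1 : ((l.map toStep).take i).count U = (l.take i).count true := by
        rw [htake, show U = toStep true from rfl]
        exact List.count_map_of_injective _ _ toStep_inj _
      have h2 : ((l.map toStep).take i).count D = (l.take i).count false := by
        rw [htake, show D = toStep false from rfl]
        exact List.count_map_of_injective _ _ toStep_inj _
      rw [h1, h2]
      exact hpre (l.take i) (List.take_prefix i l)
    · rw [mem_avoidF]
      constructor
      · exact hcU.trans hcount
      · by_contra h
        rw [Bool.not_eq_false, hasUDU_iff] at h
        rw [← infix_TFT_iff, map_toBool_toStep] at h
        exact havoid h
    · exact map_toBool_toStep l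
  · rintro ⟨p, hp, rfl⟩
    rw [mem_avoidF] at hp
    obtain ⟨hsl, hav⟩ := hp
    have hcU : (p.toList.map toBool).count true = p.toList.count U := by
      rw [show true = toBool U from rfl]
      exact List.count_map_of_injective _ _ toBool_inj _
    refine ⟨⟨?_, ?_, ?_⟩, ?_⟩
    · rw [List.length_map, ← p.two_mul_semilength_eq_length, hsl]
    · rw [hcU]; exact hsl
    · intro pfx hpfx
      rw [List.prefix_iff_eq_take] at hpfx
      set i := pfx.length
      have htake : (p.toList.map toBool).take i = (p.toList.take i).map toBool :=
        List.map_take.symm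
      have h1 : ((p.toList.take i).map toBool).count true = (p.toList.take i).count U := by
        rw [show true = toBool U from rfl]
        exact List.count_map_of_injective _ _ toBool_inj _
      have h2 : ((p.toList.take i).map toBool).count false = (p.toList.take i).count D := by
        rw [show false = toBool D from rfl]
        exact List.count_map_of_injective _ _ toBool_inj _
      rw [hpfx, htake, h1, h2]
      exact p.count_D_le_count_U i
    · intro h
      rw [infix_TFT_iff, ← hasUDU_iff] at h
      rw [hav] at h
      exact Bool.false_ne_true h

theorem stmt5 (n : ℕ) (hn : 1 ≤ n) :
    Set.ncard {l : List Bool | IsDyckPath n l ∧ ¬ ([true, false, true] <:+: l)}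
      = motzkin (n - 1) := by
  rw [set_eq, Set.ncard_coe_finset,
    Finset.card_image_of_injective _ (fun p q h => by
      have := congrArg (List.map toStep) h
      rw [map_toStep_toBool, map_toStep_toBool] at this
      exact DyckWord.ext this)]
  exact acount_eq_motzkin n hn
end

section
/- For n ≥ 1, the number of permutations in S_n avoiding 2-1-3 and avoiding 2̄^o-31 (every descent is the '31' of an odd number of occurrences of 2-31) equals binomial(3k, k)/(2k+1) if n = 2k, and binomial(3k+1, k+1)/(2k+1) if n = 2k+1. -/
/-- `π` contains the classical pattern 2-1-3: indices `i < j < k` with `π j < π i < π k`. -/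
def Contains213 {n : ℕ} (π : Equiv.Perm (Fin n)) : Prop :=
  ∃ i j k : Fin n, i < j ∧ j < k ∧ π j < π i ∧ π i < π k

/-- `π` avoids `2̄^o-31`: for every descent `π i > π (i+1)`, the number of `j < i` with
`π (i+1) < π j < π i` is odd. -/
def AvoidsOddBarred231 {n : ℕ} (π : Equiv.Perm (Fin n)) : Prop :=
  ∀ i i' : Fin n, (i' : ℕ) = (i : ℕ) + 1 → π i' < π i →
    Odd (Nat.card {j : Fin n // j < i ∧ π i' < π j ∧ π j < π i})


open Finset

def gP : ℕ → ℕ → ℕ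
  | 0, e => if e = 0 then 1 else 0
  | (m+1), v =>
      if v % 2 = (m+1) % 2 then
        ∑ w ∈ range (m+1), (if v ≤ w + 1 then gP m w else 0)
      else 0

lemma gP_zero_of_big : ∀ m v, m < v → gP m v = 0 := by
  intro m
  induction m with
  | zero => intro v hv; simp [gP]; omega
  | succ m ih =>
    intro v hv
    simp only [gP]
    split
    · apply Finset.sum_eq_zero
      intro w hw
      simp only [mem_range] at hw
      have : ¬ v ≤ w + 1 := by omega
      simp [this]
    · rfl

lemma gP_parity : ∀ m v, v % 2 ≠ m % 2 → gP m v = 0 := by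
  intro m v h
  cases m with
  | zero => simp [gP]; omega
  | succ m => simp only [gP]; rw [if_neg h]

lemma gP_diag : ∀ m, gP m m = 1 := by
  intro m
  induction m with
  | zero => simp [gP]
  | succ m ih =>
    simp only [gP, if_pos rfl]
    rw [Finset.sum_eq_single m]
    · simp [ih]
    · intro w hw hne
      simp only [mem_range] at hw
      have : ¬ m + 1 ≤ w + 1 := by omega
      simp [this]
    · simp

lemma gP_rec (m v : ℕ) (hp : v % 2 = (m+1) % 2) :
    gP (m+1) v = (if 1 ≤ v then gP m (v-1) else 0) + gP (m+1) (v+2) := by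
  have hp2 : (v+2) % 2 = (m+1) % 2 := by omega
  simp only [gP, if_pos hp, if_pos hp2]
  have hsplit : ∀ w ∈ range (m+1),
      (if v ≤ w + 1 then gP m w else 0)
        = (if w = v - 1 ∧ 1 ≤ v then gP m w else 0) + (if v + 2 ≤ w + 1 then gP m w else 0) := by
    intro w hw
    by_cases h1 : v ≤ w + 1
    · rw [if_pos h1]
      by_cases h2 : w + 1 = v
      · have : w = v - 1 ∧ 1 ≤ v := by omega
        rw [if_pos this, if_neg (by omega)]
        simp
      · rcases Nat.lt_or_ge w v with h3 | h3
        · -- w < v and w+1 ≥ v and w+1 ≠ v: impossible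
          omega
        · rcases Nat.eq_or_lt_of_le h3 with h4 | h4
          · -- w = v : parity zero
            have hz : gP m w = 0 := gP_parity m w (by omega)
            simp [hz]
          · rw [if_neg (by omega), if_pos (by omega)]; simp
    · rw [if_neg h1, if_neg (by omega), if_neg (by omega)]
  rw [Finset.sum_congr rfl hsplit, Finset.sum_add_distrib]
  congr 1
  by_cases hv : 1 ≤ v
  · simp only [hv, and_true]
    rw [Finset.sum_ite_eq' (range (m+1)) (v-1) (fun w => gP m w)]
    by_cases hm : v - 1 ∈ range (m+1)
    · rw [if_pos hm]; simp [hv]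
    · rw [if_neg hm]; simp only [hv, if_true]
      simp only [mem_range] at hm
      exact (gP_zero_of_big m (v-1) (by omega)).symm
  · simp [hv]

-- closed forms (subtraction-free parametrization: k = j + K)
lemma gP_closed : ∀ N K j : ℕ, 3*K + 2*j + 1 ≤ N →
    ((2*(j+K)+1) * gP (2*(j+K)) (2*j) = (2*j+1) * Nat.choose (2*j+3*K) K
     ∧ (j+K+1) * gP (2*(j+K)+1) (2*j+1) = (j+1) * Nat.choose (2*j+3*K+1) K) := by
  intro N
  induction N with
  | zero => intro K j h; omega
  | succ N ih =>
    intro K j hN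
    match K with
    | 0 =>
      constructor
      · simp [gP_diag (2*j)]
      · simp [gP_diag (2*j+1)]
    | (K'+1) =>
      have hP : (2*(j+(K'+1))+1) * gP (2*(j+(K'+1))) (2*j)
          = (2*j+1) * Nat.choose (2*j+3*K'+3) (K'+1) := by
        have erow : 2*(j+(K'+1)) = (2*(j+K')+1)+1 := by ring
        have hrec := gP_rec (2*(j+K')+1) (2*j) (by omega)
        rw [← erow] at hrec
        have hB : (2*(j+(K'+1))+1) * gP (2*(j+(K'+1))) (2*j+2)
            = (2*j+3) * Nat.choose (2*j+3*K'+2) K' := by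
          have h := (ih K' (j+1) (by omega)).1
          have e2 : 2*(j+1+K')+1 = 2*(j+(K'+1))+1 := by ring
          rw [e2] at h
          have e1 : 2*(j+1+K') = 2*(j+(K'+1)) := by ring
          rw [e1] at h
          have e3 : 2*(j+1) = 2*j+2 := by ring
          rw [e3] at h
          have e4 : 2*j+2+3*K' = 2*j+3*K'+2 := by ring
          rw [e4] at h
          have e5 : 2*j+2+1 = 2*j+3 := by ring
          rw [e5] at h
          exact h
        match j with
        | 0 =>
          rw [if_neg (by omega)] at hrec
          simp only [Nat.zero_add, Nat.mul_zero, Nat.one_mul] at hrec hB ⊢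
          have key := Nat.add_one_mul_choose_eq (3*K'+2) K'
          try simp only [Nat.succ_eq_add_one] at key
          have e : 3*K'+2+1 = 3*K'+3 := by ring
          rw [e] at key
          have goal2 : (K'+1) * ((2*(K'+1)+1) * gP (2*(K'+1)) 0)
              = (K'+1) * (Nat.choose (3*K'+3) (K'+1)) := by
            rw [hrec, hB]
            have hz : ((K'+1) * (3 * Nat.choose (3*K'+2) K') : ℤ)
                = ((K'+1) * (Nat.choose (3*K'+3) (K'+1)) : ℤ) := by
              have hk : ((3*K'+3) * Nat.choose (3*K'+2) K' : ℤ)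
                  = (Nat.choose (3*K'+3) (K'+1) * (K'+1) : ℤ) := by exact_mod_cast key
              linear_combination hk
            exact_mod_cast hz
          exact Nat.eq_of_mul_eq_mul_left (by omega) goal2
        | (j'+1) =>
          rw [if_pos (by omega)] at hrec
          have eA : 2*(j'+1)-1 = 2*j'+1 := by omega
          rw [eA] at hrec
          set X := Nat.choose (2*(j'+1)+3*K'+2) (K'+1) with hX
          set Y := Nat.choose (2*(j'+1)+3*K'+2) K' with hY
          have pascal : Nat.choose (2*(j'+1)+3*K'+3) (K'+1) = Y + X := by
            rw [hX, hY]
            have e : 2*(j'+1)+3*K'+3 = (2*(j'+1)+3*K'+2)+1 := by ring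
            rw [e]
            exact Nat.choose_succ_succ' (2*(j'+1)+3*K'+2) K'
          have absorb : X * (K'+1) = Y * (2*(j'+1+K'+1)) := by
            have h := Nat.choose_succ_right_eq (2*(j'+1)+3*K'+2) K'
            have e : (2*(j'+1)+3*K'+2) - K' = 2*(j'+1+K'+1) := by omega
            rw [e] at h
            rw [hX, hY]
            exact h
          have hA : (j'+1+K'+1) * gP (2*(j'+1+K')+1) (2*j'+1) = (j'+1) * X := by
            have h := (ih (K'+1) j' (by omega)).2
            have e1 : j'+(K'+1)+1 = j'+1+K'+1 := by ring
            rw [e1] at h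
            have e2 : 2*(j'+(K'+1))+1 = 2*(j'+1+K')+1 := by ring
            rw [e2] at h
            have e3 : 2*j'+3*(K'+1)+1 = 2*(j'+1)+3*K'+2 := by ring
            rw [e3] at h
            rw [hX]
            exact h
          have goal2 : (j'+1+K'+1) * ((2*(j'+1+(K'+1))+1) * gP (2*(j'+1+(K'+1))) (2*(j'+1)))
              = (j'+1+K'+1) * ((2*(j'+1)+1) * Nat.choose (2*(j'+1)+3*K'+3) (K'+1)) := by
            rw [pascal, hrec]
            have expand : (j'+1+K'+1) * ((2*(j'+1+(K'+1))+1)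
                  * (gP (2*(j'+1+K')+1) (2*j'+1) + gP (2*(j'+1+(K'+1))) (2*(j'+1)+2)))
                = (2*(j'+1+(K'+1))+1) * ((j'+1+K'+1) * gP (2*(j'+1+K')+1) (2*j'+1))
                  + (j'+1+K'+1) * ((2*(j'+1+(K'+1))+1) * gP (2*(j'+1+(K'+1))) (2*(j'+1)+2)) := by
              ring
            rw [expand, hA, hB]
            have hz : ((2*(j'+1+(K'+1))+1) * ((j'+1) * X)
                  + (j'+1+K'+1) * ((2*(j'+1)+3) * Y) : ℤ)
                = ((j'+1+K'+1) * ((2*(j'+1)+1) * (Y + X)) : ℤ) := by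
              have habs : ((X:ℤ) * (K'+1) = Y * (2*(j'+1+K'+1))) := by exact_mod_cast absorb
              linear_combination (-1 : ℤ) * habs
            exact_mod_cast hz
          exact Nat.eq_of_mul_eq_mul_left (by omega) goal2
      constructor
      · have e : 2*j+3*(K'+1) = 2*j+3*K'+3 := by ring
        rw [e]; exact hP
      -- odd-row statement
      have hrec := gP_rec (2*(j+(K'+1))) (2*j+1) (by omega)
      rw [if_pos (by omega)] at hrec
      have eA : 2*j+1-1 = 2*j := by omega
      have eB : 2*j+1+2 = 2*j+3 := by omega
      rw [eA, eB] at hrec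
      set X := Nat.choose (2*j+3*K'+3) (K'+1) with hX
      set Y := Nat.choose (2*j+3*K'+3) K' with hY
      have pascal : Nat.choose (2*j+3*K'+4) (K'+1) = Y + X := by
        rw [hX, hY]
        have e : 2*j+3*K'+4 = (2*j+3*K'+3)+1 := by ring
        rw [e]
        exact Nat.choose_succ_succ' (2*j+3*K'+3) K'
      have absorb : X * (K'+1) = Y * (2*(j+K'+1)+1) := by
        have h := Nat.choose_succ_right_eq (2*j+3*K'+3) K'
        have e : (2*j+3*K'+3) - K' = 2*(j+K'+1)+1 := by omega
        rw [e] at h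
        rw [hX, hY]
        exact h
      have hB : (j+(K'+1)+1) * gP (2*(j+(K'+1))+1) (2*j+3) = (j+2) * Y := by
        have h := (ih K' (j+1) (by omega)).2
        have e1 : j+1+K'+1 = j+(K'+1)+1 := by ring
        rw [e1] at h
        have e2 : 2*(j+1+K')+1 = 2*(j+(K'+1))+1 := by ring
        rw [e2] at h
        have e3 : 2*(j+1)+1 = 2*j+3 := by ring
        rw [e3] at h
        have e4 : 2*(j+1)+3*K'+1 = 2*j+3*K'+3 := by ring
        rw [e4] at h
        have e5 : j+1+1 = j+2 := by ring
        rw [e5] at h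
        rw [hY]
        exact h
      have hP' : (2*(j+(K'+1))+1) * gP (2*(j+(K'+1))) (2*j) = (2*j+1) * X := by
        rw [hX]; exact hP
      have etgt : 2*j+3*(K'+1)+1 = 2*j+3*K'+4 := by ring
      rw [etgt]
      have goal2 : (2*(j+(K'+1))+1) * ((j+(K'+1)+1) * gP (2*(j+(K'+1))+1) (2*j+1))
          = (2*(j+(K'+1))+1) * ((j+1) * Nat.choose (2*j+3*K'+4) (K'+1)) := by
        rw [pascal, hrec]
        have expand : (2*(j+(K'+1))+1) * ((j+(K'+1)+1)
              * (gP (2*(j+(K'+1))) (2*j) + gP (2*(j+(K'+1))+1) (2*j+3)))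
            = (j+(K'+1)+1) * ((2*(j+(K'+1))+1) * gP (2*(j+(K'+1))) (2*j))
              + (2*(j+(K'+1))+1) * ((j+(K'+1)+1) * gP (2*(j+(K'+1))+1) (2*j+3)) := by
          ring
        rw [expand, hP', hB]
        have hz : ((j+(K'+1)+1) * ((2*j+1) * X) + (2*(j+(K'+1))+1) * ((j+2) * Y) : ℤ)
            = ((2*(j+(K'+1))+1) * ((j+1) * (Y + X)) : ℤ) := by
          have habs : ((X:ℤ) * (K'+1) = Y * (2*(j+K'+1)+1)) := by exact_mod_cast absorb
          linear_combination (-1 : ℤ) * habs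
        exact_mod_cast hz
      exact Nat.eq_of_mul_eq_mul_left (by omega) goal2

open Finset Equiv
attribute [local instance] Classical.propDecidable

variable {n : ℕ}

def cod (π : Equiv.Perm (Fin n)) (i : Fin n) : ℕ :=
  (Finset.univ.filter (fun j => j < i ∧ π j < π i)).card

def Valid (π : Equiv.Perm (Fin n)) : Prop :=
  ¬ Contains213 π ∧ ∀ i : Fin n, cod π i % 2 = (i : ℕ) % 2

lemma natCard_mid (π : Equiv.Perm (Fin n)) (i i' : Fin n) :
    Nat.card {j : Fin n // j < i ∧ π i' < π j ∧ π j < π i}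
      = (Finset.univ.filter (fun j => j < i ∧ π i' < π j ∧ π j < π i)).card := by
  rw [Nat.card_eq_fintype_card, Fintype.card_subtype]

lemma cod_asc (π : Equiv.Perm (Fin n)) (i i' : Fin n) (h : (i' : ℕ) = (i : ℕ) + 1)
    (ha : π i < π i') (hav : ¬ Contains213 π) : cod π i' = cod π i + 1 := by
  have hii' : i < i' := by rw [Fin.lt_def]; omega
  have hset : (Finset.univ.filter (fun j => j < i' ∧ π j < π i'))
      = insert i (Finset.univ.filter (fun j => j < i ∧ π j < π i)) := by
    ext j
    simp only [Finset.mem_insert, Finset.mem_filter, Finset.mem_univ, true_and]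
    constructor
    · rintro ⟨hj1, hj2⟩
      by_cases hji : j = i
      · left; exact hji
      · right
        have hji' : j < i := by
          rw [Fin.lt_def] at hj1 ⊢
          have : (j : ℕ) ≠ (i : ℕ) := fun hc => hji (Fin.ext hc)
          omega
        refine ⟨hji', ?_⟩
        by_contra hc
        push_neg at hc
        have hne : π j ≠ π i := fun hc2 => hji (π.injective hc2)
        have : π i < π j := lt_of_le_of_ne hc (Ne.symm hne)
        exact hav ⟨j, i, i', hji', hii', this, hj2⟩
    · rintro (rfl | ⟨hj1, hj2⟩)
      · exact ⟨hii', ha⟩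
      · exact ⟨hj1.trans hii', hj2.trans ha⟩
  have hni : i ∉ Finset.univ.filter (fun j => j < i ∧ π j < π i) := by
    simp [lt_irrefl]
  rw [cod, hset, Finset.card_insert_of_notMem hni, cod]

lemma cod_desc (π : Equiv.Perm (Fin n)) (i i' : Fin n) (h : (i' : ℕ) = (i : ℕ) + 1)
    (hd : π i' < π i) :
    cod π i = cod π i'
      + (Finset.univ.filter (fun j => j < i ∧ π i' < π j ∧ π j < π i)).card := by
  have hii' : i < i' := by rw [Fin.lt_def]; omega
  have hset : (Finset.univ.filter (fun j => j < i ∧ π j < π i))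
      = (Finset.univ.filter (fun j => j < i' ∧ π j < π i'))
        ∪ (Finset.univ.filter (fun j => j < i ∧ π i' < π j ∧ π j < π i)) := by
    ext j
    simp only [Finset.mem_union, Finset.mem_filter, Finset.mem_univ, true_and]
    constructor
    · rintro ⟨hj1, hj2⟩
      rcases lt_trichotomy (π j) (π i') with hc | hc | hc
      · exact Or.inl ⟨hj1.trans hii', hc⟩
      · exfalso
        have : j = i' := π.injective hc
        subst this
        exact absurd (hj1.trans hii') (lt_irrefl _)
      · exact Or.inr ⟨hj1, hc, hj2⟩
    · rintro (⟨hj1, hj2⟩ | ⟨hj1, hj2, hj3⟩)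
      · have hji : j ≠ i := by
          rintro rfl
          exact absurd (hj2.trans hd) (lt_irrefl _)
        have : j < i := by
          rw [Fin.lt_def] at hj1 ⊢
          have : (j : ℕ) ≠ (i : ℕ) := fun hc => hji (Fin.ext hc)
          omega
        exact ⟨this, hj2.trans hd⟩
      · exact ⟨hj1, hj3⟩
  have hdisj : Disjoint (Finset.univ.filter (fun j => j < i' ∧ π j < π i'))
      (Finset.univ.filter (fun j => j < i ∧ π i' < π j ∧ π j < π i)) := by
    rw [Finset.disjoint_left]
    intro j hj1 hj2
    simp only [Finset.mem_filter, Finset.mem_univ, true_and] at hj1 hj2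
    exact absurd (hj1.2.trans hj2.2.1) (lt_irrefl _)
  rw [cod, hset, Finset.card_union_of_disjoint hdisj, cod]

lemma valid_iff (π : Equiv.Perm (Fin n)) :
    (¬ Contains213 π ∧ AvoidsOddBarred231 π) ↔ Valid π := by
  constructor
  · rintro ⟨hav, haob⟩
    refine ⟨hav, ?_⟩
    suffices h : ∀ m : ℕ, ∀ hm : m < n, cod π ⟨m, hm⟩ % 2 = m % 2 by
      intro i; have := h i.1 i.2; simpa using this
    intro m
    induction m with
    | zero =>
      intro hm
      have : (Finset.univ.filter (fun j => j < (⟨0, hm⟩ : Fin n) ∧ π j < π ⟨0, hm⟩)) = ∅ := by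
        apply Finset.filter_false_of_mem
        intro j _
        rintro ⟨hj, -⟩
        rw [Fin.lt_def] at hj
        simp at hj
      simp [cod, this]
    | succ m ih =>
      intro hm
      have hm' : m < n := by omega
      have hih := ih hm'
      have hne : π ⟨m, hm'⟩ ≠ π ⟨m+1, hm⟩ := by
        intro hc
        have := congrArg Fin.val (π.injective hc)
        simp at this
      rcases lt_or_gt_of_ne hne with ha | hd
      · have := cod_asc π ⟨m, hm'⟩ ⟨m+1, hm⟩ rfl ha hav
        omega
      · have hodd := haob ⟨m, hm'⟩ ⟨m+1, hm⟩ rfl hd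
        rw [natCard_mid] at hodd
        have := cod_desc π ⟨m, hm'⟩ ⟨m+1, hm⟩ rfl hd
        obtain ⟨t, ht⟩ := hodd
        omega
  · rintro ⟨hav, hpar⟩
    refine ⟨hav, ?_⟩
    intro i i' h hd
    rw [natCard_mid]
    have := cod_desc π i i' h hd
    have h1 := hpar i
    have h2 := hpar i'
    rw [Nat.odd_iff]
    omega

def delLast (π : Equiv.Perm (Fin (n+1))) : Equiv.Perm (Fin n) :=
  Equiv.removeNone
    (finSuccEquivLast.symm.trans ((π : Fin (n+1) ≃ Fin (n+1)).trans
      (finSuccEquiv' (π (Fin.last n)))))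

def extLast (σ : Equiv.Perm (Fin n)) (v : Fin (n+1)) : Equiv.Perm (Fin (n+1)) :=
  finSuccEquivLast.trans ((Equiv.optionCongr σ).trans (finSuccEquiv' v).symm)

lemma extLast_last (σ : Equiv.Perm (Fin n)) (v : Fin (n+1)) :
    extLast σ v (Fin.last n) = v := by
  simp [extLast, finSuccEquivLast_last, finSuccEquiv'_symm_none]

lemma extLast_castSucc (σ : Equiv.Perm (Fin n)) (v : Fin (n+1)) (i : Fin n) :
    extLast σ v (Fin.castSucc i) = v.succAbove (σ i) := by
  simp [extLast, finSuccEquivLast_castSucc, finSuccEquiv'_symm_some]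

lemma delLast_key (π : Equiv.Perm (Fin (n+1))) (i : Fin n) :
    (π (Fin.last n)).succAbove (delLast π i) = π (Fin.castSucc i) := by
  set e := finSuccEquivLast.symm.trans ((π : Fin (n+1) ≃ Fin (n+1)).trans
      (finSuccEquiv' (π (Fin.last n)))) with he
  have henone : e none = none := by
    simp [he, finSuccEquivLast, finSuccEquiv'_at]
  have hsome : ∃ x', e (some i) = some x' := by
    cases hx : e (some i) with
    | none =>
      exfalso
      have : (some i : Option (Fin n)) = none := e.injective (hx.trans henone.symm)
      simp at this
    | some y => exact ⟨y, rfl⟩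
  have h1 : some (e.removeNone i) = e (some i) := Equiv.removeNone_some e hsome
  have h2 : e (some i) = finSuccEquiv' (π (Fin.last n)) (π (Fin.castSucc i)) := by
    simp [he, finSuccEquivLast_symm_some]
  rw [h2] at h1
  have h3 := congrArg (finSuccEquiv' (π (Fin.last n))).symm h1
  rw [Equiv.symm_apply_apply, finSuccEquiv'_symm_some] at h3
  rw [← h3]
  rfl

lemma delLast_extLast (σ : Equiv.Perm (Fin n)) (v : Fin (n+1)) :
    delLast (extLast σ v) = σ := by
  apply Equiv.ext
  intro i
  apply Fin.succAbove_right_injective (p := v)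
  have := delLast_key (extLast σ v) i
  rw [extLast_castSucc, extLast_last] at this
  exact this

lemma extLast_delLast (π : Equiv.Perm (Fin (n+1))) :
    extLast (delLast π) (π (Fin.last n)) = π := by
  apply Equiv.ext
  intro x
  induction x using Fin.lastCases with
  | last => rw [extLast_last]
  | cast i => rw [extLast_castSucc, delLast_key]

lemma contains213_iff (π : Equiv.Perm (Fin (n+1))) :
    Contains213 π ↔ Contains213 (delLast π)
      ∨ ∃ a b : Fin n, a < b ∧ delLast π b < delLast π a
          ∧ Fin.castSucc (delLast π a) < π (Fin.last n) := by
  set σ := delLast π with hσ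
  set v := π (Fin.last n) with hv
  constructor
  · rintro ⟨x, y, z, hxy, hyz, h1, h2⟩
    have hylast : y ≠ Fin.last n := Fin.ne_last_of_lt hyz
    have hxlast : x ≠ Fin.last n := Fin.ne_last_of_lt hxy
    set x' := x.castPred hxlast with hx'
    set y' := y.castPred hylast with hy'
    have hxc : x = Fin.castSucc x' := (Fin.castSucc_castPred x hxlast).symm
    have hyc : y = Fin.castSucc y' := (Fin.castSucc_castPred y hylast).symm
    have hx'y' : x' < y' := by
      rw [hxc, hyc, Fin.castSucc_lt_castSucc_iff] at hxy
      exact hxy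
    have hπx : π x = v.succAbove (σ x') := by rw [hxc, ← delLast_key]
    have hπy : π y = v.succAbove (σ y') := by rw [hyc, ← delLast_key]
    by_cases hz : z = Fin.last n
    · right
      refine ⟨x', y', hx'y', ?_, ?_⟩
      · rw [hπx, hπy, Fin.succAbove_lt_succAbove_iff] at h1
        exact h1
      · rw [hz] at h2
        rw [hπx, Fin.succAbove_lt_iff_castSucc_lt] at h2
        exact h2
    · left
      set z' := z.castPred hz with hz'
      have hzc : z = Fin.castSucc z' := (Fin.castSucc_castPred z hz).symm
      have hπz : π z = v.succAbove (σ z') := by rw [hzc, ← delLast_key]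
      have hy'z' : y' < z' := by
        rw [hyc, hzc, Fin.castSucc_lt_castSucc_iff] at hyz
        exact hyz
      refine ⟨x', y', z', hx'y', hy'z', ?_, ?_⟩
      · rw [hπx, hπy, Fin.succAbove_lt_succAbove_iff] at h1; exact h1
      · rw [hπx, hπz, Fin.succAbove_lt_succAbove_iff] at h2; exact h2
  · rintro (⟨x, y, z, hxy, hyz, h1, h2⟩ | ⟨a, b, hab, h1, h2⟩)
    · refine ⟨Fin.castSucc x, Fin.castSucc y, Fin.castSucc z,
        Fin.castSucc_lt_castSucc_iff.2 hxy, Fin.castSucc_lt_castSucc_iff.2 hyz, ?_, ?_⟩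
      · rw [← delLast_key, ← delLast_key, Fin.succAbove_lt_succAbove_iff]
        exact h1
      · rw [← delLast_key, ← delLast_key, Fin.succAbove_lt_succAbove_iff]
        exact h2
    · refine ⟨Fin.castSucc a, Fin.castSucc b, Fin.last n,
        Fin.castSucc_lt_castSucc_iff.2 hab, Fin.castSucc_lt_last b, ?_, ?_⟩
      · rw [← delLast_key, ← delLast_key, Fin.succAbove_lt_succAbove_iff]
        exact h1
      · rw [← delLast_key, Fin.succAbove_lt_iff_castSucc_lt]
        exact h2

lemma star_lemma (σ : Equiv.Perm (Fin (n+1))) (v : Fin (n+2)) (hσ : ¬ Contains213 σ) :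
    (¬ ∃ a b : Fin (n+1), a < b ∧ σ b < σ a ∧ Fin.castSucc (σ a) < v)
      ↔ (v : ℕ) ≤ (σ (Fin.last n) : ℕ) + 1 := by
  constructor
  · intro hno
    by_contra hge
    push_neg at hge
    apply hno
    have hw1 : (σ (Fin.last n) : ℕ) + 1 < n + 1 := by
      have := v.2
      omega
    set u : Fin (n+1) := ⟨(σ (Fin.last n) : ℕ) + 1, hw1⟩ with hu
    set p := σ.symm u with hp
    have hpu : σ p = u := σ.apply_symm_apply u
    have hplast : p ≠ Fin.last n := by
      intro hc
      rw [hc] at hpu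
      have := congrArg Fin.val hpu
      simp [hu] at this
    have hplt : p < Fin.last n := lt_of_le_of_ne (Fin.le_last p) hplast
    refine ⟨p, Fin.last n, hplt, ?_, ?_⟩
    · rw [hpu, Fin.lt_def]
      simp [hu]
    · rw [hpu, Fin.lt_def]
      simp only [Fin.coe_castSucc, hu]
      omega
  · rintro hle ⟨a, b, hab, h1, h2⟩
    have halast : a ≠ Fin.last n := Fin.ne_last_of_lt hab
    have hva : (σ a : ℕ) < (v : ℕ) := h2
    have hne : σ a ≠ σ (Fin.last n) := fun hc => halast (σ.injective hc)
    have hlt : σ a < σ (Fin.last n) := by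
      rw [Fin.lt_def]
      have : (σ a : ℕ) ≠ (σ (Fin.last n) : ℕ) := fun hc => hne (Fin.ext hc)
      omega
    by_cases hblast : b = Fin.last n
    · rw [hblast] at h1
      exact absurd (h1.trans hlt) (lt_irrefl _)
    · have hblt : b < Fin.last n := lt_of_le_of_ne (Fin.le_last b) hblast
      exact hσ ⟨a, b, Fin.last n, hab, hblt, h1, hlt⟩

lemma cod_castSucc (π : Equiv.Perm (Fin (n+1))) (i : Fin n) :
    cod π (Fin.castSucc i) = cod (delLast π) i := by
  unfold cod
  refine Finset.card_bij'
    (fun a ha => a.castPred ?_)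
    (fun b _ => Fin.castSucc b) ?_ ?_ ?_ ?_
  · have ha' := (Finset.mem_filter.1 ha).2.1
    exact Fin.ne_last_of_lt (ha'.trans (Fin.castSucc_lt_last i))
  · intro a ha
    obtain ⟨-, h1, h2⟩ := Finset.mem_filter.1 ha
    have hne : a ≠ Fin.last n := Fin.ne_last_of_lt (h1.trans (Fin.castSucc_lt_last i))
    simp only [Finset.mem_filter, Finset.mem_univ, true_and]
    have hac : Fin.castSucc (a.castPred hne) = a := Fin.castSucc_castPred a hne
    constructor
    · rw [← Fin.castSucc_lt_castSucc_iff, hac]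
      exact h1
    · rw [← Fin.succAbove_lt_succAbove_iff (p := π (Fin.last n)), delLast_key, delLast_key, hac]
      exact h2
  · intro b hb
    obtain ⟨-, h1, h2⟩ := Finset.mem_filter.1 hb
    simp only [Finset.mem_filter, Finset.mem_univ, true_and]
    constructor
    · exact Fin.castSucc_lt_castSucc_iff.2 h1
    · rw [← delLast_key, ← delLast_key, Fin.succAbove_lt_succAbove_iff]
      exact h2
  · intro a ha
    exact Fin.castSucc_castPred a _
  · intro b hb
    exact Fin.castPred_castSucc

lemma cod_last (π : Equiv.Perm (Fin (n+1))) :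
    cod π (Fin.last n) = (π (Fin.last n) : ℕ) := by
  unfold cod
  have hset : (Finset.univ.filter (fun j => j < Fin.last n ∧ π j < π (Fin.last n)))
      = Finset.univ.filter (fun j => π j < π (Fin.last n)) := by
    ext j
    simp only [Finset.mem_filter, Finset.mem_univ, true_and]
    constructor
    · rintro ⟨-, h⟩; exact h
    · intro h
      refine ⟨?_, h⟩
      have hne : j ≠ Fin.last n := by
        rintro rfl
        exact absurd h (lt_irrefl _)
      exact lt_of_le_of_ne (Fin.le_last j) hne
  rw [hset]
  have hcard : (Finset.univ.filter (fun j => π j < π (Fin.last n))).card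
      = (Finset.univ.filter (fun u => u < π (Fin.last n))).card := by
    refine Finset.card_bij' (fun a _ => π a) (fun u _ => π.symm u) ?_ ?_ ?_ ?_
    · intro a ha
      simp only [Finset.mem_filter, Finset.mem_univ, true_and] at ha ⊢
      exact ha
    · intro u hu
      simp only [Finset.mem_filter, Finset.mem_univ, true_and] at hu ⊢
      rw [π.apply_symm_apply]
      exact hu
    · intro a _; exact π.symm_apply_apply a
    · intro u _; exact π.apply_symm_apply u
  rw [hcard]
  have : (Finset.univ.filter (fun u => u < π (Fin.last n))) = Finset.Iio (π (Fin.last n)) := by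
    ext u
    simp [Finset.mem_Iio]
  rw [this, Fin.card_Iio]

lemma valid_rec (π : Equiv.Perm (Fin (n+2))) :
    Valid π ↔ Valid (delLast π)
      ∧ (π (Fin.last (n+1)) : ℕ) ≤ (delLast π (Fin.last n) : ℕ) + 1
      ∧ (π (Fin.last (n+1)) : ℕ) % 2 = (n+1) % 2 := by
  constructor
  · rintro ⟨hC, hpar⟩
    have hCσ : ¬ Contains213 (delLast π) := fun h => hC ((contains213_iff π).2 (Or.inl h))
    have hNoBad : ¬ ∃ a b : Fin (n+1), a < b ∧ delLast π b < delLast π a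
        ∧ Fin.castSucc (delLast π a) < π (Fin.last (n+1)) :=
      fun h => hC ((contains213_iff π).2 (Or.inr h))
    refine ⟨⟨hCσ, ?_⟩, (star_lemma (delLast π) (π (Fin.last (n+1))) hCσ).1 hNoBad, ?_⟩
    · intro i
      have := hpar (Fin.castSucc i)
      rw [cod_castSucc] at this
      rw [this, Fin.coe_castSucc]
    · have := hpar (Fin.last (n+1))
      rw [cod_last] at this
      rw [this, Fin.val_last]
  · rintro ⟨⟨hCσ, hparσ⟩, hb, hp⟩
    constructor
    · intro h
      rcases (contains213_iff π).1 h with h' | h'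
      · exact hCσ h'
      · exact (star_lemma (delLast π) (π (Fin.last (n+1))) hCσ).2 hb h'
    · intro i
      induction i using Fin.lastCases with
      | last => rw [cod_last, Fin.val_last]; exact hp
      | cast i => rw [cod_castSucc, Fin.coe_castSucc]; exact hparσ i


noncomputable def AP (m e : ℕ) : ℕ :=
  (Finset.univ.filter (fun π : Equiv.Perm (Fin (m+1)) =>
      Valid π ∧ (π (Fin.last m) : ℕ) = e)).card

lemma AP_zero (e : ℕ) : AP 0 e = if e = 0 then 1 else 0 := by
  unfold AP
  have hval : ∀ π : Equiv.Perm (Fin 1), Valid π ∧ (π (Fin.last 0) : ℕ) = 0 := by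
    intro π
    refine ⟨⟨?_, ?_⟩, ?_⟩
    · rintro ⟨i, j, k, hij, -, -⟩
      rw [Subsingleton.elim i j] at hij
      exact absurd hij (lt_irrefl _)
    · intro i
      have h0 : (Finset.univ.filter (fun j => j < i ∧ π j < π i)) = ∅ := by
        apply Finset.filter_false_of_mem
        intro j _
        rintro ⟨hj, -⟩
        rw [Subsingleton.elim j i] at hj
        exact absurd hj (lt_irrefl _)
      have h1 : (i : ℕ) = 0 := by omega
      unfold cod
      rw [h0, Finset.card_empty, h1]
    · have := (π (Fin.last 0)).2
      omega
  by_cases he : e = 0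
  · subst he
    rw [if_pos rfl]
    rw [Finset.filter_true_of_mem (fun π _ => hval π)]
    simp
  · rw [if_neg he]
    rw [Finset.filter_false_of_mem, Finset.card_empty]
    intro π _
    rintro ⟨-, h2⟩
    have := (hval π).2
    omega

lemma AP_succ (m v : ℕ) :
    AP (m+1) v = if v % 2 = (m+1) % 2 then
        ∑ w ∈ Finset.range (m+1), (if v ≤ w + 1 then AP m w else 0) else 0 := by
  by_cases hbig : v ≤ m + 1
  swap
  · have hL : AP (m+1) v = 0 := by
      unfold AP
      rw [Finset.card_eq_zero]
      apply Finset.filter_false_of_mem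
      intro π _
      rintro ⟨-, h2⟩
      have := (π (Fin.last (m+1))).2
      omega
    rw [hL]
    split
    · symm
      apply Finset.sum_eq_zero
      intro w hw
      rw [Finset.mem_range] at hw
      rw [if_neg (by omega)]
    · rfl
  by_cases hp : v % 2 = (m+1) % 2
  · rw [if_pos hp]
    set vv : Fin (m+2) := ⟨v, by omega⟩ with hvv
    have step1 : AP (m+1) v = (Finset.univ.filter (fun σ : Equiv.Perm (Fin (m+1)) =>
        Valid σ ∧ v ≤ (σ (Fin.last m) : ℕ) + 1)).card := by
      unfold AP
      refine Finset.card_bij' (fun π _ => delLast π)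
        (fun σ _ => extLast σ vv) ?_ ?_ ?_ ?_
      · intro π hπ
        obtain ⟨-, hV, hv⟩ := Finset.mem_filter.1 hπ
        obtain ⟨hV', hb, -⟩ := (valid_rec π).1 hV
        simp only [Finset.mem_filter, Finset.mem_univ, true_and]
        exact ⟨hV', hv ▸ hb⟩
      · intro σ hσ
        obtain ⟨-, hV, hb⟩ := Finset.mem_filter.1 hσ
        simp only [Finset.mem_filter, Finset.mem_univ, true_and]
        have hlast : extLast σ vv (Fin.last (m+1)) = vv := extLast_last σ vv
        constructor
        · rw [valid_rec, delLast_extLast, hlast]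
          exact ⟨hV, hb, hp⟩
        · rw [hlast]
      · intro π hπ
        obtain ⟨-, -, hv⟩ := Finset.mem_filter.1 hπ
        have : π (Fin.last (m+1)) = vv := Fin.ext hv
        rw [← this]
        exact extLast_delLast π
      · intro σ hσ
        exact delLast_extLast σ _
    rw [step1]
    rw [Finset.card_eq_sum_card_fiberwise
      (f := fun σ : Equiv.Perm (Fin (m+1)) => (σ (Fin.last m) : ℕ)) (t := Finset.range (m+1))
      (fun σ _ => Finset.mem_range.2 (σ (Fin.last m)).2)]
    apply Finset.sum_congr rfl
    intro w hw
    rw [Finset.filter_filter]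
    by_cases hvw : v ≤ w + 1
    · rw [if_pos hvw]
      unfold AP
      congr 1
      ext σ
      simp only [Finset.mem_filter, Finset.mem_univ, true_and]
      constructor
      · rintro ⟨⟨h1, -⟩, h3⟩; exact ⟨h1, h3⟩
      · rintro ⟨h1, h3⟩; exact ⟨⟨h1, by omega⟩, h3⟩
    · rw [if_neg hvw]
      rw [Finset.card_eq_zero]
      apply Finset.filter_false_of_mem
      intro σ _
      rintro ⟨⟨-, h2⟩, h3⟩
      omega
  · rw [if_neg hp]
    unfold AP
    rw [Finset.card_eq_zero]
    apply Finset.filter_false_of_mem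
    intro π _
    rintro ⟨hV, hv⟩
    obtain ⟨-, -, hpar⟩ := (valid_rec π).1 hV
    rw [hv] at hpar
    exact hp hpar

lemma AP_eq_gP : ∀ m v, AP m v = gP m v := by
  intro m
  induction m with
  | zero =>
    intro v
    rw [AP_zero]
    simp [gP]
  | succ m ih =>
    intro v
    rw [AP_succ]
    show _ = gP (m+1) v
    simp only [gP]
    by_cases hp : v % 2 = (m+1) % 2
    · rw [if_pos hp, if_pos hp]
      apply Finset.sum_congr rfl
      intro w _
      rw [ih w]
    · rw [if_neg hp, if_neg hp]

lemma count_master (m : ℕ) :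
    Nat.card {π : Equiv.Perm (Fin (m+1)) // ¬ Contains213 π ∧ AvoidsOddBarred231 π}
      = gP (m+1) ((m+1) % 2) := by
  rw [Nat.card_eq_fintype_card, Fintype.card_subtype]
  have hfe : (Finset.univ.filter
      (fun π : Equiv.Perm (Fin (m+1)) => ¬ Contains213 π ∧ AvoidsOddBarred231 π))
      = Finset.univ.filter (fun π => Valid π) := by
    ext π
    simp only [Finset.mem_filter, Finset.mem_univ, true_and]
    exact valid_iff π
  rw [hfe]
  have h1 : (Finset.univ.filter (fun π : Equiv.Perm (Fin (m+1)) => Valid π)).card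
      = ∑ w ∈ Finset.range (m+1), AP m w := by
    rw [Finset.card_eq_sum_card_fiberwise
      (f := fun π : Equiv.Perm (Fin (m+1)) => (π (Fin.last m) : ℕ)) (t := Finset.range (m+1))
      (fun π _ => Finset.mem_range.2 (π (Fin.last m)).2)]
    apply Finset.sum_congr rfl
    intro w _
    rw [Finset.filter_filter]
    rfl
  rw [h1]
  have h2 : gP (m+1) ((m+1) % 2) = ∑ w ∈ Finset.range (m+1), gP m w := by
    show (if (m+1) % 2 % 2 = (m+1) % 2 then
        ∑ w ∈ Finset.range (m+1), (if (m+1) % 2 ≤ w + 1 then gP m w else 0) else 0) = _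
    rw [if_pos (by omega)]
    apply Finset.sum_congr rfl
    intro w _
    rw [if_pos (by omega)]
  rw [h2]
  apply Finset.sum_congr rfl
  intro w _
  exact AP_eq_gP m w

theorem stmt6 (n k : ℕ) (hn : 1 ≤ n) :
    (n = 2 * k →
      (Nat.card {π : Equiv.Perm (Fin n) // ¬ Contains213 π ∧ AvoidsOddBarred231 π} : ℚ)
        = (Nat.choose (3 * k) k : ℚ) / (2 * k + 1)) ∧
    (n = 2 * k + 1 →
      (Nat.card {π : Equiv.Perm (Fin n) // ¬ Contains213 π ∧ AvoidsOddBarred231 π} : ℚ)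
        = (Nat.choose (3 * k + 1) (k + 1) : ℚ) / (2 * k + 1)) := by
  constructor
  · intro h
    subst h
    obtain ⟨m, hm⟩ : ∃ m, 2 * k = m + 1 := ⟨2 * k - 1, by omega⟩
    rw [hm, count_master m, ← hm]
    have hmod : 2 * k % 2 = 0 := by omega
    rw [hmod]
    have hcf := (gP_closed (3 * k + 1) k 0 (by omega)).1
    have e1 : 2 * (0 + k) = 2 * k := by ring
    have e2 : 2 * (0 + k) + 1 = 2 * k + 1 := by ring
    rw [e2, e1] at hcf
    have e3 : (2 * (0:ℕ)) = 0 := by ring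
    rw [e3] at hcf
    have e4 : (2 * (0:ℕ) + 1) = 1 := by ring
    rw [e4] at hcf
    have e5 : (2 * (0:ℕ) + 3 * k) = 3 * k := by ring
    rw [e5, one_mul] at hcf
    -- hcf : (2*k+1) * gP (2*k) 0 = choose (3*k) k
    have hpos : ((2 * k + 1 : ℕ) : ℚ) ≠ 0 := by positivity
    rw [eq_div_iff (by push_cast at hpos ⊢; exact_mod_cast hpos)]
    rw [mul_comm]
    exact_mod_cast congrArg (fun x : ℕ => (x : ℚ)) hcf
  · intro h
    subst h
    rw [count_master (2 * k)]
    have hmod : (2 * k + 1) % 2 = 1 := by omega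
    rw [hmod]
    have hcf := (gP_closed (3 * k + 1) k 0 (by omega)).2
    have e1 : 2 * (0 + k) + 1 = 2 * k + 1 := by ring
    rw [e1] at hcf
    have e2 : (0:ℕ) + k + 1 = k + 1 := by ring
    rw [e2] at hcf
    have e3 : (2 * (0:ℕ) + 1) = 1 := by ring
    rw [e3] at hcf
    have e4 : (2 * (0:ℕ) + 3 * k + 1) = 3 * k + 1 := by ring
    rw [e4, one_mul] at hcf
    -- hcf : (k+1) * gP (2*k+1) 1 = choose (3*k+1) k
    have cross : (2 * k + 1) * Nat.choose (3 * k + 1) k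
        = (k + 1) * Nat.choose (3 * k + 1) (k + 1) := by
      have habs := Nat.choose_succ_right_eq (3 * k + 1) k
      have e : 3 * k + 1 - k = 2 * k + 1 := by omega
      rw [e] at habs
      exact (mul_comm _ _).trans (habs.symm.trans (mul_comm _ _))
    have hq : ((k + 1 : ℚ)) * ((gP (2 * k + 1) 1 : ℚ) * (2 * k + 1))
        = ((k + 1 : ℚ)) * (Nat.choose (3 * k + 1) (k + 1) : ℚ) := by
      have h1 : ((k + 1 : ℕ) * gP (2 * k + 1) 1 : ℚ) = (Nat.choose (3 * k + 1) k : ℚ) := by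
        exact_mod_cast congrArg (fun x : ℕ => (x : ℚ)) hcf
      have h2 : ((2 * k + 1 : ℕ) * Nat.choose (3 * k + 1) k : ℚ)
          = ((k + 1 : ℕ) * Nat.choose (3 * k + 1) (k + 1) : ℚ) := by
        exact_mod_cast congrArg (fun x : ℕ => (x : ℚ)) cross
      push_cast at h1 h2 ⊢
      calc ((k:ℚ) + 1) * ((gP (2 * k + 1) 1 : ℚ) * (2 * k + 1))
          = (2 * (k:ℚ) + 1) * (((k:ℚ) + 1) * (gP (2 * k + 1) 1 : ℚ)) := by ring
        _ = (2 * (k:ℚ) + 1) * (Nat.choose (3 * k + 1) k : ℚ) := by rw [h1]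
        _ = ((k:ℚ) + 1) * (Nat.choose (3 * k + 1) (k + 1) : ℚ) := h2
    have hk1 : ((k : ℚ) + 1) ≠ 0 := by positivity
    have := mul_left_cancel₀ hk1 hq
    rw [eq_div_iff (by positivity)]
    exact_mod_cast this
end
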